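/- arXiv:2006.10364 — 2 statements merged into one kernel-verified Lean document; each statement's English description precedes it below -/
import Mathlib

section
/- Let G be a connected graph, (X, Y) a partition of V(G) such that Y induces a clique in G, let d ≥ 1 and k ≥ 1 be integers, let Y' ⊆ Y be (d,k)-marked, and let G' = G[X ∪ Y']. If G' is contractible to a complete graph with contraction cost c ≤ k, then G is contractible to a complete graph with contraction cost c* satisfying d·c* ≤ (d+1)·c. -/
/-- `G` is contractible to a complete graph with contraction cost `c`: there is a
surjection `ψ` onto the vertex set of a complete graph whose witness sets are connected,
with an edge of `G` between any two distinct witness sets, and total cost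
`Σ_h (|W(h)| − 1) = c`. -/
def ContractsToCompleteWithCost {α : Type*} (G : SimpleGraph α) (c : ℕ) : Prop :=
  ∃ (n : ℕ) (ψ : α → Fin n),
    Function.Surjective ψ ∧
    (∀ h : Fin n, (G.induce {v | ψ v = h}).Connected) ∧
    (∀ h h' : Fin n, h ≠ h' → ∃ u v : α, G.Adj u v ∧ ψ u = h ∧ ψ v = h') ∧
    ∑ h : Fin n, ({v | ψ v = h}.ncard - 1) = c

/-- `Y' ⊆ Y` is `(d, k)`-marked with respect to the partition `(X, Y)`:
(M1) every subset `A ⊆ X` with `|A| ≤ d` having a common neighbor in `Y` has a common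
neighbor in `Y'`; (M2) if some `y ∈ Y \ Y'` has no neighbor in a set `A ⊆ X` with
`|A| ≤ d`, then at least `2k + 1` vertices of `Y'` have no neighbor in `A`. -/
def IsMarked {V : Type*} (G : SimpleGraph V) (X Y Y' : Set V) (d k : ℕ) : Prop :=
  Y' ⊆ Y ∧
  (∀ A : Set V, A ⊆ X → A.ncard ≤ d →
    (∃ y ∈ Y, A ⊆ G.neighborSet y) → ∃ y' ∈ Y', A ⊆ G.neighborSet y') ∧
  (∀ A : Set V, A ⊆ X → A.ncard ≤ d →
    (∃ y ∈ Y \ Y', G.neighborSet y ∩ A = ∅) →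
    2 * k + 1 ≤ {y' ∈ Y' | G.neighborSet y' ∩ A = ∅}.ncard)

open SimpleGraph Set Function

section Helpers

variable {V ι : Type*}

lemma induce_singleton_connected (G : SimpleGraph V) (x : V) :
    (G.induce {x}).Connected := by
  rw [SimpleGraph.connected_iff]
  refine ⟨fun a b => ?_, ⟨⟨x, rfl⟩⟩⟩
  obtain ⟨a, ha⟩ := a
  obtain ⟨b, hb⟩ := b
  simp only [Set.mem_singleton_iff] at ha hb
  subst ha; subst hb
  exact SimpleGraph.Reachable.refl _

lemma induce_image_connected_iff (G : SimpleGraph V) (S : Set V) (T : Set ↥S) :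
    ((G.induce S).induce T).Connected ↔ (G.induce (Subtype.val '' T)).Connected := by
  refine SimpleGraph.Iso.connected_iff ⟨Equiv.Set.image _ T Subtype.val_injective, ?_⟩
  rintro ⟨⟨a, ha⟩, ha'⟩ ⟨⟨b, hb⟩, hb'⟩
  simp [Equiv.Set.image, Equiv.Set.imageOfInjOn]

lemma star_union_connected (G : SimpleGraph V) {s : Set V} (hs : (G.induce s).Connected)
    (B : Finset ι) (t : ι → Set V) (ht : ∀ i ∈ B, (G.induce (t i)).Connected)
    (he : ∀ i ∈ B, ∃ u ∈ s, ∃ v ∈ t i, G.Adj u v) :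
    (G.induce (s ∪ ⋃ i ∈ B, t i)).Connected := by
  classical
  induction B using Finset.induction with
  | empty =>
    have : s ∪ ⋃ i ∈ (∅ : Finset ι), t i = s := by simp
    rwa [this]
  | insert i B hnot ih =>
    have hprev : (G.induce (s ∪ ⋃ j ∈ B, t j)).Connected :=
      ih (fun j hj => ht j (Finset.mem_insert_of_mem hj))
        (fun j hj => he j (Finset.mem_insert_of_mem hj))
    obtain ⟨u, hu, v, hv, huv⟩ := he i (Finset.mem_insert_self i B)
    have hconn := SimpleGraph.connected_induce_union hprev.preconnected
      (ht i (Finset.mem_insert_self i B)).preconnected (Set.mem_union_left _ hu) hv huv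
    have heq : s ∪ ⋃ j ∈ insert i B, t j = (s ∪ ⋃ j ∈ B, t j) ∪ t i := by
      rw [Finset.set_biUnion_insert]
      rw [Set.union_comm (t i), ← Set.union_assoc]
    rwa [heq]

lemma ncard_biUnion_le [Fintype V] (B : Finset ι) (t : ι → Set V) :
    (⋃ i ∈ B, t i).ncard ≤ ∑ i ∈ B, (t i).ncard := by
  classical
  induction B using Finset.induction with
  | empty => simp
  | insert i B hnot ih =>
    rw [Finset.set_biUnion_insert, Finset.sum_insert hnot]
    exact le_trans (Set.ncard_union_le _ _) (by omega)

lemma cost_sum_eq [Fintype V] {β : Type*} [Fintype β] (ψ : V → β) (hs : Surjective ψ) :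
    ∑ b : β, ({v | ψ v = b}.ncard - 1) + Fintype.card β = Fintype.card V := by
  classical
  have h1 : ∀ b : β, {v | ψ v = b}.ncard = (Finset.univ.filter (fun a => ψ a = b)).card := by
    intro b
    rw [← Set.ncard_coe_finset]
    congr 1
    ext v
    simp
  have h2 : Fintype.card V = ∑ b : β, (Finset.univ.filter (fun a => ψ a = b)).card :=
    Finset.card_eq_sum_card_fiberwise (fun x _ => Finset.mem_univ (ψ x))
  have h3 : ∀ b : β, 1 ≤ {v | ψ v = b}.ncard := by
    intro b
    obtain ⟨v, hv⟩ := hs b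
    have hm : v ∈ {v | ψ v = b} := hv
    exact (Set.ncard_pos (Set.toFinite _)).mpr ⟨v, hm⟩
  have h4 : ∑ b : β, ({v | ψ v = b}.ncard - 1) + Fintype.card β
      = ∑ b : β, {v | ψ v = b}.ncard := by
    rw [Fintype.card, Finset.card_eq_sum_ones, ← Finset.sum_add_distrib]
    exact Finset.sum_congr rfl fun b _ => Nat.sub_add_cancel (h3 b)
  rw [h4, h2]
  exact Finset.sum_congr rfl fun b _ => h1 b

lemma contracts_of_surjection {α : Type*} {β : Type*} [Fintype β] (G : SimpleGraph α)
    (ψ : α → β) (c : ℕ) (h1 : Surjective ψ)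
    (h2 : ∀ b, (G.induce {v | ψ v = b}).Connected)
    (h3 : ∀ b b' : β, b ≠ b' → ∃ u v : α, G.Adj u v ∧ ψ u = b ∧ ψ v = b')
    (h4 : ∑ b : β, ({v | ψ v = b}.ncard - 1) = c) :
    ContractsToCompleteWithCost G c := by
  classical
  let e := Fintype.equivFin β
  refine ⟨Fintype.card β, e ∘ ψ, ?_, ?_, ?_, ?_⟩
  · exact e.surjective.comp h1
  · intro h
    have : {v | (e ∘ ψ) v = h} = {v | ψ v = e.symm h} := by
      ext v; simp [Equiv.eq_symm_apply]
    rw [this]; exact h2 _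
  · intro h h' hne
    obtain ⟨u, v, ha, hu, hv⟩ := h3 (e.symm h) (e.symm h') (fun he => hne (by
      simpa using congrArg e he))
    exact ⟨u, v, ha, by simp [hu], by simp [hv]⟩
  · rw [← h4, ← Equiv.sum_comp e.symm (fun b => ({v | ψ v = b}.ncard - 1))]
    apply Finset.sum_congr rfl
    intro h _
    have hset : {v | (e ∘ ψ) v = h} = {v | ψ v = e.symm h} := by
      ext v; simp [Equiv.eq_symm_apply]
    rw [hset]
end Helpers

/-- If `G'` = `G[X ∪ Y']` is contractible to a complete graph with cost `c ≤ k`, then `G`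
is contractible to a complete graph with some cost `c*` satisfying `d·c* ≤ (d+1)·c`. -/
theorem stmt_7 {V : Type*} [Fintype V] (G : SimpleGraph V) (hconn : G.Connected)
    (X Y : Set V) (hunion : X ∪ Y = Set.univ) (hdisj : Disjoint X Y)
    (hclique : ∀ u ∈ Y, ∀ v ∈ Y, u ≠ v → G.Adj u v)
    (d k : ℕ) (hd : 1 ≤ d) (hk : 1 ≤ k)
    (Y' : Set V) (hmark : IsMarked G X Y Y' d k)
    (c : ℕ) (hck : c ≤ k)
    (hG' : ContractsToCompleteWithCost (G.induce (X ∪ Y')) c) :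
    ∃ cStar : ℕ, ContractsToCompleteWithCost G cStar ∧ d * cStar ≤ (d + 1) * c := by
  classical
  obtain ⟨hY'Y, hM1, hM2⟩ := hmark
  set S : Set V := X ∪ Y' with hSdef
  obtain ⟨n, ψ', hsurj', hconn', hadj', hsum'⟩ := hG'
  have hXY' : Disjoint X Y' := hdisj.mono_right hY'Y
  have hcomplS : ∀ v, v ∉ S ↔ v ∈ Y \ Y' := by
    intro v
    constructor
    · intro hv
      have hvX : v ∉ X := fun h => hv (Or.inl h)
      have hvY : v ∈ Y := by
        have hm : v ∈ X ∪ Y := hunion ▸ Set.mem_univ v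
        rcases hm with hm | hm
        · exact absurd hm hvX
        · exact hm
      exact ⟨hvY, fun h => hv (Or.inr h)⟩
    · rintro ⟨hvY, hvY'⟩ (hvX | hvY'2)
      · exact (hdisj.ne_of_mem hvX hvY) rfl
      · exact hvY' hvY'2
  -- fibers
  set F : Fin n → Set ↥S := fun h => {u | ψ' u = h} with hFdef
  set W : Fin n → Set V := fun h => Subtype.val '' F h with hWdef
  have hWmem : ∀ (v : V) (hv : v ∈ S) (h : Fin n), v ∈ W h ↔ ψ' ⟨v, hv⟩ = h := by
    intro v hv h
    constructor
    · rintro ⟨u, hu, rfl⟩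
      exact hu
    · intro he
      exact ⟨⟨v, hv⟩, he, rfl⟩
  have hWS : ∀ h, W h ⊆ S := fun h => Subtype.coe_image_subset _ _
  have hWconn : ∀ h, (G.induce (W h)).Connected := by
    intro h
    exact (induce_image_connected_iff G S (F h)).mp (hconn' h)
  have hWadj : ∀ h h' : Fin n, h ≠ h' → ∃ u v : V, G.Adj u v ∧ u ∈ W h ∧ v ∈ W h' := by
    intro h h' hne
    obtain ⟨u, v, ha, hu, hv⟩ := hadj' h h' hne
    exact ⟨u.1, v.1, ha, ⟨u, hu, rfl⟩, ⟨v, hv, rfl⟩⟩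
  have hWne : ∀ h, (W h).Nonempty := by
    intro h
    obtain ⟨u, hu⟩ := hsurj' h
    exact ⟨u.1, u, hu, rfl⟩
  have hWncard : ∀ h, (W h).ncard = (F h).ncard := fun h =>
    Set.ncard_image_of_injective _ Subtype.val_injective
  -- bad witness sets
  set BadF : Finset (Fin n) :=
    Finset.univ.filter (fun h => W h ⊆ X ∧ ∃ y ∈ Y \ Y', G.neighborSet y ∩ W h = ∅)
    with hBadFdef
  have hBadF_mem : ∀ h, h ∈ BadF ↔ (W h ⊆ X ∧ ∃ y ∈ Y \ Y', G.neighborSet y ∩ W h = ∅) := by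
    intro h; simp [hBadFdef]
  -- Y' is large if Y \ Y' is nonempty
  have hYbig : (Y \ Y').Nonempty → 2 * k + 1 ≤ Y'.ncard := by
    rintro ⟨y, hy⟩
    have h0 : {y' ∈ Y' | G.neighborSet y' ∩ (∅ : Set V) = ∅} = Y' := by
      ext y'; simp
    have := hM2 ∅ (Set.empty_subset _) (by simp) ⟨y, hy, by simp⟩
    rwa [h0] at this
  -- every bad witness set has at least d+1 vertices
  have hbig : ∀ h ∈ BadF, d + 1 ≤ (W h).ncard := by
    intro h hh
    rw [hBadF_mem] at hh
    obtain ⟨hWX, y, hyY, hyN⟩ := hh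
    by_contra hlt
    push_neg at hlt
    have hle : (W h).ncard ≤ d := by omega
    have hT := hM2 (W h) hWX hle ⟨y, hyY, hyN⟩
    set T := {y' ∈ Y' | G.neighborSet y' ∩ W h = ∅} with hTdef
    set BigF : Finset (Fin n) := Finset.univ.filter (fun h' => 2 ≤ (W h').ncard) with hBigFdef
    have hTsub : T ⊆ ⋃ h' ∈ BigF, W h' := by
      rintro y' ⟨hy'Y', hy'N⟩
      have hy'S : y' ∈ S := Or.inr hy'Y'
      set h' := ψ' ⟨y', hy'S⟩ with hh'def
      have hy'W : y' ∈ W h' := (hWmem y' hy'S h').mpr rfl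
      have hne : h' ≠ h := by
        intro he
        have : y' ∈ X := hWX (he ▸ hy'W)
        exact (hXY'.ne_of_mem this hy'Y') rfl
      have h2 : 2 ≤ (W h').ncard := by
        by_contra h2'
        push_neg at h2'
        have hsub : ∀ z ∈ W h', z = y' := by
          intro z hz
          by_contra hzne
          have : 1 < (W h').ncard := (Set.one_lt_ncard_iff (Set.toFinite _)).mpr
            ⟨z, y', hz, hy'W, hzne⟩
          omega
        obtain ⟨u, v, ha, hu, hv⟩ := hWadj h' h hne
        rw [hsub u hu] at ha
        have : v ∈ G.neighborSet y' ∩ W h := ⟨ha, hv⟩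
        rw [hy'N] at this
        exact this
      exact Set.mem_iUnion₂.mpr ⟨h', Finset.mem_filter.mpr ⟨Finset.mem_univ _, h2⟩, hy'W⟩
    have hT2c : T.ncard ≤ 2 * c := by
      have hc1 : T.ncard ≤ ∑ h' ∈ BigF, (W h').ncard :=
        le_trans (Set.ncard_le_ncard hTsub (Set.toFinite _)) (ncard_biUnion_le _ _)
      have hc2 : ∑ h' ∈ BigF, (W h').ncard ≤ ∑ h' ∈ BigF, 2 * ((F h').ncard - 1) := by
        apply Finset.sum_le_sum
        intro h' hh'
        have : 2 ≤ (W h').ncard := by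
          have := hh'
          rw [hBigFdef] at this
          simpa using this
        rw [hWncard] at this ⊢
        omega
      have hc3 : ∑ h' ∈ BigF, 2 * ((F h').ncard - 1) ≤ 2 * c := by
        rw [← Finset.mul_sum]
        have : ∑ h' ∈ BigF, ((F h').ncard - 1) ≤ ∑ h' : Fin n, ((F h').ncard - 1) :=
          Finset.sum_le_sum_of_subset (Finset.subset_univ _)
        rw [hsum'] at this
        omega
      omega
    omega
  -- an anchor outside BadF exists if BadF is nonempty
  have hanchor : BadF.Nonempty → ∃ h₀ : Fin n, h₀ ∉ BadF := by
    rintro ⟨h1, hh1⟩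
    rw [hBadF_mem] at hh1
    obtain ⟨_, y, hyY, _⟩ := hh1
    have hY'ne : Y'.Nonempty := by
      have := hYbig ⟨y, hyY⟩
      exact Set.nonempty_of_ncard_ne_zero (by omega)
    obtain ⟨y₀, hy₀⟩ := hY'ne
    have hy₀S : y₀ ∈ S := Or.inr hy₀
    refine ⟨ψ' ⟨y₀, hy₀S⟩, ?_⟩
    rw [hBadF_mem]
    rintro ⟨hWX, -⟩
    have : y₀ ∈ W (ψ' ⟨y₀, hy₀S⟩) := (hWmem y₀ hy₀S _).mpr rfl
    exact (hXY'.ne_of_mem (hWX this) hy₀) rfl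
  -- the redirection map
  obtain ⟨f, hf1, hf2⟩ : ∃ f : Fin n → {h : Fin n // h ∉ BadF},
      (∀ (h : Fin n) (hh : h ∉ BadF), f h = ⟨h, hh⟩) ∧
      (∀ h h', h ∈ BadF → h' ∈ BadF → f h = f h') := by
    by_cases hB : BadF.Nonempty
    · obtain ⟨h₀, hh₀⟩ := hanchor hB
      refine ⟨fun h => if hh : h ∈ BadF then ⟨h₀, hh₀⟩ else ⟨h, hh⟩, ?_, ?_⟩
      · intro h hh; simp [hh]
      · intro h h' hh hh'; simp [hh, hh']
    · refine ⟨fun h => ⟨h, fun hh => hB ⟨h, hh⟩⟩, fun h hh => rfl, ?_⟩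
      intro h h' hh _
      exact absurd ⟨h, hh⟩ hB
  -- the extended contraction map
  set Ψ : V → ({h : Fin n // h ∉ BadF} ⊕ ↥(Sᶜ)) := fun v =>
    if hv : v ∈ S then Sum.inl (f (ψ' ⟨v, hv⟩)) else Sum.inr ⟨v, hv⟩ with hΨdef
  have hΨS : ∀ (v : V) (hv : v ∈ S), Ψ v = Sum.inl (f (ψ' ⟨v, hv⟩)) := by
    intro v hv; simp [hΨdef, hv]
  have hΨout : ∀ (v : V) (hv : v ∉ S), Ψ v = Sum.inr ⟨v, hv⟩ := by
    intro v hv; simp [hΨdef, hv]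
  have hΨW : ∀ (b : {h : Fin n // h ∉ BadF}) (v : V), v ∈ W b.1 → Ψ v = Sum.inl b := by
    intro b v hvW
    have hv : v ∈ S := hWS _ hvW
    rw [hΨS v hv, (hWmem v hv b.1).mp hvW, hf1 b.1 b.2]
  have hfiber_inl : ∀ b : {h : Fin n // h ∉ BadF},
      {v | Ψ v = Sum.inl b} = W b.1 ∪ ⋃ h' ∈ BadF.filter (fun h' => f h' = b), W h' := by
    intro b
    ext v
    simp only [Set.mem_setOf_eq, Set.mem_union, Set.mem_iUnion₂, Finset.mem_filter]
    constructor
    · intro hv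
      by_cases hvS : v ∈ S
      · rw [hΨS v hvS] at hv
        have hfv : f (ψ' ⟨v, hvS⟩) = b := Sum.inl.inj hv
        by_cases hbad : ψ' ⟨v, hvS⟩ ∈ BadF
        · exact Or.inr ⟨ψ' ⟨v, hvS⟩, ⟨hbad, hfv⟩, (hWmem v hvS _).mpr rfl⟩
        · have heq : (⟨ψ' ⟨v, hvS⟩, hbad⟩ : {h : Fin n // h ∉ BadF}) = b := by
            rw [← hf1 _ hbad]; exact hfv
          have hvb : ψ' ⟨v, hvS⟩ = b.1 := congrArg Subtype.val heq
          exact Or.inl ((hWmem v hvS b.1).mpr hvb)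
      · rw [hΨout v hvS] at hv
        exact absurd hv (by simp)
    · intro hv
      rcases hv with hv | ⟨h', ⟨hh'bad, hfh'⟩, hvW⟩
      · exact hΨW b v hv
      · have hvS : v ∈ S := hWS _ hvW
        rw [hΨS v hvS, (hWmem v hvS h').mp hvW, hfh']
  have hfiber_inr : ∀ o : ↥(Sᶜ), {v | Ψ v = Sum.inr o} = {o.1} := by
    intro o
    ext v
    simp only [Set.mem_setOf_eq, Set.mem_singleton_iff]
    constructor
    · intro hv
      by_cases hvS : v ∈ S
      · rw [hΨS v hvS] at hv; exact absurd hv (by simp)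
      · rw [hΨout v hvS] at hv
        exact congrArg Subtype.val (Sum.inr.inj hv)
    · rintro rfl
      have hvS : o.1 ∉ S := o.2
      rw [hΨout o.1 hvS]
  -- surjectivity
  have hΨsurj : Surjective Ψ := by
    rintro (b | o)
    · obtain ⟨v, hv⟩ := hWne b.1
      exact ⟨v, hΨW b v hv⟩
    · refine ⟨o.1, ?_⟩
      have hvS : o.1 ∉ S := o.2
      rw [hΨout o.1 hvS]
  -- connectivity of fibers
  have hΨconn : ∀ b, (G.induce {v | Ψ v = b}).Connected := by
    rintro (b | o)
    · rw [hfiber_inl]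
      refine star_union_connected G (hWconn b.1) _ _ (fun i _ => hWconn i) ?_
      intro i hi
      obtain ⟨hibad, -⟩ := Finset.mem_filter.mp hi
      have hne : b.1 ≠ i := fun he => b.2 (he ▸ hibad)
      obtain ⟨u, v, ha, hu, hv⟩ := hWadj b.1 i hne
      exact ⟨u, hu, v, hv, ha⟩
    · rw [hfiber_inr]
      exact induce_singleton_connected G o.1
  -- mixed adjacency helper
  have hmix : ∀ (b : {h : Fin n // h ∉ BadF}) (o : ↥(Sᶜ)),
      ∃ w y : V, G.Adj w y ∧ Ψ w = Sum.inl b ∧ Ψ y = Sum.inr o := by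
    intro b o
    set y := o.1 with hydef
    have hyS : y ∉ S := o.2
    have hyYY' : y ∈ Y \ Y' := (hcomplS y).mp hyS
    have hΨy : Ψ y = Sum.inr o := by rw [hΨout y hyS]
    have hh := b.2
    rw [hBadF_mem] at hh
    by_cases hWX : W b.1 ⊆ X
    · have hne : ¬ ∃ y ∈ Y \ Y', G.neighborSet y ∩ W b.1 = ∅ := fun he => hh ⟨hWX, he⟩
      push_neg at hne
      obtain ⟨w, hwN, hwW⟩ := hne y hyYY'
      exact ⟨w, y, (G.adj_symm hwN), hΨW b w hwW, hΨy⟩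
    · obtain ⟨w, hwW, hwX⟩ := Set.not_subset.mp hWX
      have hwY' : w ∈ Y' := (hWS b.1 hwW).resolve_left hwX
      have hadj : G.Adj y w := hclique y hyYY'.1 w (hY'Y hwY')
        (fun he => hyYY'.2 (he ▸ hwY'))
      exact ⟨w, y, hadj.symm, hΨW b w hwW, hΨy⟩
  -- adjacency between fibers
  have hΨadj : ∀ b b', b ≠ b' → ∃ u v : V, G.Adj u v ∧ Ψ u = b ∧ Ψ v = b' := by
    rintro (b | o) (b' | o') hne
    · have hne1 : b.1 ≠ b'.1 := fun he => hne (congrArg Sum.inl (Subtype.ext he))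
      obtain ⟨u, v, ha, hu, hv⟩ := hWadj b.1 b'.1 hne1
      exact ⟨u, v, ha, hΨW b u hu, hΨW b' v hv⟩
    · obtain ⟨w, y, ha, hw, hy⟩ := hmix b o'
      exact ⟨w, y, ha, hw, hy⟩
    · obtain ⟨w, y, ha, hw, hy⟩ := hmix b' o
      exact ⟨y, w, ha.symm, hy, hw⟩
    · have hne1 : o.1 ≠ o'.1 := fun he => hne (congrArg Sum.inr (Subtype.ext he))
      have h1 : o.1 ∈ Y \ Y' := (hcomplS o.1).mp o.2
      have h2 : o'.1 ∈ Y \ Y' := (hcomplS o'.1).mp o'.2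
      refine ⟨o.1, o'.1, hclique o.1 h1.1 o'.1 h2.1 hne1, ?_, ?_⟩
      · rw [hΨout o.1 o.2]
      · rw [hΨout o'.1 o'.2]
  -- cost computation
  have hΨcost := cost_sum_eq Ψ hΨsurj
  have hcard_sum : Fintype.card ({h : Fin n // h ∉ BadF} ⊕ ↥(Sᶜ))
      = Fintype.card {h : Fin n // h ∉ BadF} + Fintype.card ↥(Sᶜ) := Fintype.card_sum
  have hcard_sub : Fintype.card {h : Fin n // h ∉ BadF} + BadF.card = n := by
    rw [Fintype.card_subtype_compl, Fintype.card_coe, Fintype.card_fin]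
    have : BadF.card ≤ n := by
      have := Finset.card_le_univ BadF
      simpa using this
    omega
  have hcard_compl : Fintype.card ↥S + Fintype.card ↥(Sᶜ) = Fintype.card V := by
    rw [Fintype.card_compl_set]
    have : Fintype.card ↥S ≤ Fintype.card V := Fintype.card_le_of_injective _ Subtype.val_injective
    omega
  have hcS : c + n = Fintype.card ↥S := by
    have := cost_sum_eq ψ' hsurj'
    rw [Fintype.card_fin] at this
    have hss : ∑ h : Fin n, ({v | ψ' v = h}.ncard - 1) = c := hsum'
    omega
  have hdb : d * BadF.card ≤ c := by
    have h1 : ∀ h ∈ BadF, d ≤ {v | ψ' v = h}.ncard - 1 := by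
      intro h hh
      have := hbig h hh
      rw [hWncard] at this
      have hFh : (F h).ncard = {v | ψ' v = h}.ncard := rfl
      omega
    calc d * BadF.card = ∑ _h ∈ BadF, d := by
          rw [Finset.sum_const, smul_eq_mul, mul_comm]
      _ ≤ ∑ h ∈ BadF, ({v | ψ' v = h}.ncard - 1) := Finset.sum_le_sum h1
      _ ≤ ∑ h : Fin n, ({v | ψ' v = h}.ncard - 1) :=
          Finset.sum_le_sum_of_subset (Finset.subset_univ _)
      _ = c := hsum'
  set cStar := Fintype.card V - Fintype.card ({h : Fin n // h ∉ BadF} ⊕ ↥(Sᶜ)) with hcStar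
  have hcsval : cStar = c + BadF.card := by omega
  refine ⟨cStar, ?_, ?_⟩
  · exact contracts_of_surjection G Ψ cStar hΨsurj hΨconn hΨadj (by omega)
  · calc d * cStar = d * c + d * BadF.card := by rw [hcsval]; ring
      _ ≤ d * c + c := by omega
      _ = (d + 1) * c := by ring
end

section
/- Let G be a connected graph, (X, Y) a partition of V(G) such that Y induces a clique in G, let d ≥ 1 and k ≥ 1 be integers, let Y' ⊆ Y be (d,k)-marked, and let G' = G[X ∪ Y']. If G is contractible to a complete graph with contraction cost c ≤ k, then G' is contractible to a complete graph with contraction cost at most c. -/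
attribute [local instance] Classical.propDecidable


section Aux
variable {V : Type*} (G : SimpleGraph V)

/-- Adjacency restricted to a set. -/
def RelOn (S : Set V) (a b : V) : Prop := G.Adj a b ∧ a ∈ S ∧ b ∈ S

/-- Connectivity of an induced subgraph, phrased on the ambient type. -/
def ConnOn (S : Set V) : Prop :=
  S.Nonempty ∧ ∀ a ∈ S, ∀ b ∈ S, Relation.ReflTransGen (RelOn G S) a b

variable {G}

lemma relOn_symm {S : Set V} : Symmetric (RelOn G S) :=
  fun _ _ h => ⟨h.1.symm, h.2.2, h.2.1⟩

lemma relOn_mono {S T : Set V} (hST : S ⊆ T) {a b : V} (h : RelOn G S a b) : RelOn G T a b :=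
  ⟨h.1, hST h.2.1, hST h.2.2⟩

lemma rtg_mono {S T : Set V} (hST : S ⊆ T) {a b : V}
    (h : Relation.ReflTransGen (RelOn G S) a b) :
    Relation.ReflTransGen (RelOn G T) a b := by
  induction h with
  | refl => exact .refl
  | tail _ hbc ih => exact ih.tail (relOn_mono hST hbc)

lemma walk_to_rtg {S : Set V} {u v : ↥S} (w : (G.induce S).Walk u v) :
    Relation.ReflTransGen (RelOn G S) u.1 v.1 := by
  induction w with
  | nil => exact .refl
  | @cons a b c h _ ih => exact .head ⟨h, a.2, b.2⟩ ih

lemma rtg_to_reachable {S : Set V} {a b : V} (h : Relation.ReflTransGen (RelOn G S) a b)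
    (ha : a ∈ S) : ∀ (hb : b ∈ S), (G.induce S).Reachable ⟨a, ha⟩ ⟨b, hb⟩ := by
  induction h with
  | refl => exact fun _ => SimpleGraph.Reachable.refl _
  | @tail b c _ hbc ih =>
      intro hc
      exact (ih hbc.2.1).trans (SimpleGraph.Adj.reachable (by exact hbc.1))

lemma connOn_iff (S : Set V) : (G.induce S).Connected ↔ ConnOn G S := by
  constructor
  · intro h
    refine ⟨Set.nonempty_coe_sort.1 h.nonempty, fun a ha b hb => ?_⟩
    obtain ⟨w⟩ := h.preconnected ⟨a, ha⟩ ⟨b, hb⟩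
    exact walk_to_rtg w
  · rintro ⟨hne, h⟩
    have : Nonempty ↥S := Set.nonempty_coe_sort.2 hne
    refine ⟨fun u v => ?_⟩
    exact rtg_to_reachable (h u.1 u.2 v.1 v.2) u.2 v.2

lemma connOn_induce_iff {s : Set V} (T : Set ↥s) :
    ConnOn (G.induce s) T ↔ ConnOn G (Subtype.val '' T) := by
  constructor
  · rintro ⟨hne, h⟩
    refine ⟨hne.image _, ?_⟩
    rintro a ⟨a', ha', rfl⟩ b ⟨b', hb', rfl⟩
    refine Relation.ReflTransGen.lift Subtype.val ?_ _ _ (h a' ha' b' hb')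
    rintro x y ⟨hxy, hx, hy⟩
    exact ⟨hxy, ⟨x, hx, rfl⟩, ⟨y, hy, rfl⟩⟩
  · rintro ⟨hne, h⟩
    constructor
    · obtain ⟨x, ⟨x', hx', rfl⟩⟩ := hne
      exact ⟨x', hx'⟩
    · intro a ha b hb
      have key : ∀ (y : V), Relation.ReflTransGen (RelOn G (Subtype.val '' T)) a.1 y →
          ∀ (hy : y ∈ s), (⟨y, hy⟩ : ↥s) ∈ T →
          Relation.ReflTransGen (RelOn (G.induce s) T) a ⟨y, hy⟩ := by
        intro y hy
        induction hy with
        | refl =>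
            intro hy hyT
            have : a = ⟨a.1, hy⟩ := Subtype.ext rfl
            rw [← this]
        | @tail x y _ hxy ih =>
            intro hy hyT
            obtain ⟨x', hx'T, hxv⟩ := hxy.2.1
            have hxs : x ∈ s := hxv ▸ x'.2
            have hxT : (⟨x, hxs⟩ : ↥s) ∈ T := by
              have : x' = ⟨x, hxs⟩ := Subtype.ext hxv
              rwa [← this]
            refine (ih hxs hxT).tail ?_
            have hadj : (G.induce s).Adj ⟨x, hxs⟩ ⟨y, hy⟩ := by
              rw [SimpleGraph.comap_adj]; exact hxy.1
            exact ⟨hadj, hxT, hyT⟩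
      obtain ⟨b', hb'T, hbv⟩ : ∃ b' ∈ T, (b' : V) = b.1 := ⟨b, hb, rfl⟩
      have := key b.1 (h a.1 ⟨a, ha, rfl⟩ b.1 ⟨b, hb, rfl⟩) b.2 (by
        have : b = (⟨b.1, b.2⟩ : ↥s) := Subtype.ext rfl
        rwa [← this])
      have hbb : (⟨b.1, b.2⟩ : ↥s) = b := Subtype.ext rfl
      rwa [hbb] at this

lemma rtg_base {S : Set V} (base : V) (hbase : base ∈ S)
    (h : ∀ a ∈ S, Relation.ReflTransGen (RelOn G S) a base) :
    ConnOn G S := by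
  refine ⟨⟨base, hbase⟩, fun a ha b hb => ?_⟩
  exact (h a ha).trans (((@Relation.ReflTransGen.symmetric _ _ ⟨fun _ _ h => relOn_symm h⟩).symm _ _) (h b hb))

end Aux

lemma sum_fibers {V : Type*} [Fintype V] {n : ℕ} (ψ : V → Fin n)
    (hsurj : Function.Surjective ψ) :
    (∑ h : Fin n, ({v | ψ v = h}.ncard - 1)) + n = Fintype.card V := by
  have h1 : ∀ h : Fin n, {v | ψ v = h}.ncard
      = (Finset.univ.filter (fun v => ψ v = h)).card := by
    intro h
    rw [Set.ncard_eq_toFinset_card', Set.toFinset_setOf]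
  have h3 : ∀ h : Fin n, 1 ≤ (Finset.univ.filter (fun v => ψ v = h)).card := by
    intro h
    obtain ⟨v, hv⟩ := hsurj h
    refine Finset.card_pos.2 ⟨v, ?_⟩
    simp [hv]
  have h2 : Fintype.card V = ∑ h : Fin n, (Finset.univ.filter (fun v => ψ v = h)).card := by
    rw [← Finset.card_univ]
    exact Finset.card_eq_sum_card_fiberwise (fun x _ => Finset.mem_univ _)
  calc (∑ h : Fin n, ({v | ψ v = h}.ncard - 1)) + n
      = (∑ h : Fin n, ((Finset.univ.filter (fun v => ψ v = h)).card - 1)) + n := by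
        simp only [h1]
    _ = ∑ h : Fin n, (((Finset.univ.filter (fun v => ψ v = h)).card - 1) + 1) := by
        rw [Finset.sum_add_distrib]; simp
    _ = ∑ h : Fin n, (Finset.univ.filter (fun v => ψ v = h)).card := by
        refine Finset.sum_congr rfl fun h _ => Nat.succ_pred_eq_of_pos (h3 h)
    _ = Fintype.card V := h2.symm

lemma package {V : Type*} [Fintype V] (G : SimpleGraph V) (s : Set V) {ι : Type} [Fintype ι]
    (P : ι → Set V)
    (hdisj : ∀ i j : ι, i ≠ j → Disjoint (P i) (P j))
    (hcover : (⋃ i, P i) = s)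
    (hne : ∀ i, (P i).Nonempty)
    (hconn : ∀ i, ConnOn G (P i))
    (hadj : ∀ i j : ι, i ≠ j → ∃ u ∈ P i, ∃ v ∈ P j, G.Adj u v) :
    ∃ c', ContractsToCompleteWithCost (G.induce s) c' ∧ c' + Fintype.card ι = s.ncard := by
  haveI : Fintype ↥s := Fintype.ofFinite _
  set n := Fintype.card ι with hn
  let e : ι ≃ Fin n := Fintype.equivFin ι
  have hmem : ∀ v : ↥s, ∃ i, v.1 ∈ P i := by
    intro v
    exact Set.mem_iUnion.1 (by rw [hcover]; exact v.2)
  let idx : ↥s → ι := fun v => (hmem v).choose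
  have hidx : ∀ v, v.1 ∈ P (idx v) := fun v => (hmem v).choose_spec
  have huniq : ∀ (v : ↥s) (i : ι), v.1 ∈ P i → idx v = i := by
    intro v i hv
    by_contra hni
    exact Set.disjoint_left.1 (hdisj _ _ hni) (hidx v) hv
  have hins : ∀ {x : V} {i : ι}, x ∈ P i → x ∈ s := by
    intro x i hx
    rw [← hcover]
    exact Set.mem_iUnion.2 ⟨i, hx⟩
  let ψ : ↥s → Fin n := fun v => e (idx v)
  have hψ : ∀ (v : ↥s) (i : ι), v.1 ∈ P i → ψ v = e i := by
    intro v i hv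
    simp only [ψ, huniq v i hv]
  have hfib : ∀ h : Fin n, Subtype.val '' {v : ↥s | ψ v = h} = P (e.symm h) := by
    intro h
    ext x
    constructor
    · rintro ⟨v, hv, rfl⟩
      have : idx v = e.symm h := by
        have : e (idx v) = h := hv
        rw [← this]; simp
      rw [← this]; exact hidx v
    · intro hx
      refine ⟨⟨x, hins hx⟩, ?_, rfl⟩
      show ψ _ = h
      rw [hψ _ _ hx]; simp
  have hsurj : Function.Surjective ψ := by
    intro h
    obtain ⟨x, hx⟩ := hne (e.symm h)
    refine ⟨⟨x, hins hx⟩, ?_⟩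
    rw [hψ _ _ hx]; simp
  refine ⟨∑ h : Fin n, ({v : ↥s | ψ v = h}.ncard - 1), ⟨n, ψ, hsurj, ?_, ?_, rfl⟩, ?_⟩
  · intro h
    rw [connOn_iff, connOn_induce_iff, hfib]
    exact hconn _
  · intro h h' hhh
    have hij : (e.symm h) ≠ (e.symm h') := fun hc => hhh (by simpa using congrArg e hc)
    obtain ⟨u, hu, v, hv, huv⟩ := hadj _ _ hij
    refine ⟨⟨u, hins hu⟩, ⟨v, hins hv⟩, ?_, ?_, ?_⟩
    · exact huv
    · rw [hψ _ _ hu]; simp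
    · rw [hψ _ _ hv]; simp
  · rw [sum_fibers ψ hsurj]
    rw [← Nat.card_coe_set_eq, Nat.card_eq_fintype_card]

/-- If `G` is contractible to a complete graph with contraction cost `c ≤ k`, then so is
the induced subgraph `G' = G[X ∪ Y']`, with contraction cost at most `c`. -/
theorem stmt_8 {V : Type*} [Fintype V] (G : SimpleGraph V) (hconn : G.Connected)
    (X Y : Set V) (hunion : X ∪ Y = Set.univ) (hdisj : Disjoint X Y)
    (hclique : ∀ u ∈ Y, ∀ v ∈ Y, u ≠ v → G.Adj u v)
    (d k : ℕ) (hd : 1 ≤ d) (hk : 1 ≤ k)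
    (Y' : Set V) (hmark : IsMarked G X Y Y' d k)
    (c : ℕ) (hck : c ≤ k)
    (hG : ContractsToCompleteWithCost G c) :
    ∃ c' : ℕ, c' ≤ c ∧ ContractsToCompleteWithCost (G.induce (X ∪ Y')) c' := by
  classical
  obtain ⟨hY'Y, hM1, hM2⟩ := hmark
  obtain ⟨n, ψ, hsurj, hconnW, hadjW, hcost⟩ := hG
  have hWconn : ∀ h : Fin n, ConnOn G {v | ψ v = h} := fun h => (connOn_iff _).1 (hconnW h)
  have hcn : c + n = Fintype.card V := by rw [← hcost]; exact sum_fibers ψ hsurj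
  set R : Set V := Y \ Y' with hRdef
  set s : Set V := X ∪ Y' with hsdef
  have hsR : s ∪ R = Set.univ := by
    rw [← hunion]
    ext v
    simp only [hsdef, hRdef, Set.mem_union, Set.mem_diff]
    tauto
  have hsRdisj : Disjoint s R := by
    rw [Set.disjoint_left]
    rintro v (hvX | hvY') ⟨hvY, hvnY'⟩
    · exact Set.disjoint_left.1 hdisj hvX hvY
    · exact hvnY' hvY'
  by_cases hRe : R = ∅
  · -- R empty: s = univ, reuse the same partition
    have hs : s = Set.univ := by
      rw [← hsR, hRe, Set.union_empty]
    obtain ⟨c', hc', hcard⟩ := package G s (fun h : Fin n => {v | ψ v = h})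
      (fun i j hij => by
        rw [Set.disjoint_left]
        intro v hv hv'
        exact hij (hv ▸ hv'.symm ▸ rfl))
      (by
        rw [hs]
        ext v
        simp only [Set.mem_iUnion, Set.mem_setOf_eq, Set.mem_univ, iff_true]
        exact ⟨ψ v, rfl⟩)
      (fun i => hsurj i)
      hWconn
      (fun i j hij => by
        obtain ⟨u, v, huv, hu, hv⟩ := hadjW i j hij
        exact ⟨u, hu, v, hv, huv⟩)
    refine ⟨c', ?_, hc'⟩
    have : s.ncard = Fintype.card V := by
      rw [hs, Set.ncard_univ, Nat.card_eq_fintype_card]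
    simp only [Fintype.card_fin] at hcard
    omega
  · -- main case
    obtain ⟨r₀, hr₀⟩ := Set.nonempty_iff_ne_empty.2 hRe
    -- |Y'| ≥ 2k+1
    have hY'card : 2 * k + 1 ≤ Y'.ncard := by
      have h := hM2 ∅ (Set.empty_subset _) (by simp) ⟨r₀, hr₀, by simp⟩
      have heq : {y' ∈ Y' | G.neighborSet y' ∩ (∅ : Set V) = ∅} = Y' := by
        ext y; simp
      rwa [heq] at h
    -- find a singleton-bag vertex y* in Y'
    have hWcard : ∀ h : Fin n, {v | ψ v = h}.ncard
        = (Finset.univ.filter (fun v => ψ v = h)).card := by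
      intro h
      rw [Set.ncard_eq_toFinset_card', Set.toFinset_setOf]
    have hBig : ∃ ystar ∈ Y', ∀ w, ψ w = ψ ystar → w = ystar := by
      set B : Finset V := Finset.univ.filter (fun v => ∃ w, w ≠ v ∧ ψ w = ψ v) with hB
      have hBcard : B.card ≤ 2 * c := by
        have h1 : B.card = ∑ h : Fin n, (B.filter (fun v => ψ v = h)).card :=
          Finset.card_eq_sum_card_fiberwise (fun x _ => Finset.mem_univ _)
        have h2 : ∀ h : Fin n, (B.filter (fun v => ψ v = h)).card
            ≤ 2 * ((Finset.univ.filter (fun v => ψ v = h)).card - 1) := by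
          intro h
          by_cases hbe : (B.filter (fun v => ψ v = h)) = ∅
          · rw [hbe]; simp
          · obtain ⟨v, hv⟩ := Finset.nonempty_iff_ne_empty.2 hbe
            rw [Finset.mem_filter, hB, Finset.mem_filter] at hv
            obtain ⟨⟨-, w, hwv, hww⟩, hvh⟩ := hv
            have h2le : 2 ≤ (Finset.univ.filter (fun v => ψ v = h)).card := by
              have : ({w, v} : Finset V) ⊆ Finset.univ.filter (fun v => ψ v = h) := by
                intro x hx
                rcases Finset.mem_insert.1 hx with rfl | hx
                · simp [hww, hvh]
                · rw [Finset.mem_singleton] at hx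
                  simp [hx, hvh]
              calc 2 = ({w, v} : Finset V).card := by rw [Finset.card_insert_of_notMem (by simp [hwv]), Finset.card_singleton]
                _ ≤ _ := Finset.card_le_card this
            have hsub : (B.filter (fun v => ψ v = h)).card
                ≤ (Finset.univ.filter (fun v => ψ v = h)).card :=
              Finset.card_le_card (by intro x hx; rw [Finset.mem_filter] at hx ⊢; exact ⟨Finset.mem_univ _, hx.2⟩)
            omega
        calc B.card = ∑ h : Fin n, (B.filter (fun v => ψ v = h)).card := h1
          _ ≤ ∑ h : Fin n, 2 * ((Finset.univ.filter (fun v => ψ v = h)).card - 1) :=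
              Finset.sum_le_sum (fun h _ => h2 h)
          _ = 2 * ∑ h : Fin n, ((Finset.univ.filter (fun v => ψ v = h)).card - 1) :=
              (Finset.mul_sum _ _ _).symm
          _ = 2 * c := by
              rw [← hcost]
              congr 1
              exact Finset.sum_congr rfl (fun h _ => by rw [hWcard h])
      have hnotsub : ¬ (Y' ⊆ (B : Set V)) := by
        intro hsub
        have := Set.ncard_le_ncard hsub (B : Set V).toFinite
        rw [Set.ncard_coe_finset] at this
        omega
      obtain ⟨ystar, hyY', hynB⟩ := Set.not_subset.1 hnotsub
      refine ⟨ystar, hyY', ?_⟩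
      intro w hw
      by_contra hne
      exact hynB (Finset.mem_coe.2 (Finset.mem_filter.2 ⟨Finset.mem_univ _, ⟨w, hne, hw⟩⟩))
    obtain ⟨ystar, hystarY', hstar⟩ := hBig
    have hystarY : ystar ∈ Y := hY'Y hystarY'
    set hstarIdx : Fin n := ψ ystar with hhstar
    set meets : Fin n → Prop := fun h => ∃ r ∈ R, ψ r = h with hmeets
    have hmstar : ¬ meets hstarIdx := by
      rintro ⟨r, hrR, hrψ⟩
      have := hstar r hrψ
      subst this
      exact hrR.2 hystarY'
    set kept : Fin n → Prop := fun g => ¬ meets g ∧ g ≠ hstarIdx with hkept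
    set U : Set V := {x | x ∈ X ∧ meets (ψ x)} with hU
    set RTGU : V → V → Prop := Relation.ReflTransGen (RelOn G U) with hRTGU
    have hUX : U ⊆ X := fun x hx => hx.1
    have hRTGUsymm : ∀ a b, RTGU a b → RTGU b a :=
      fun a b h => ((@Relation.ReflTransGen.symmetric _ _ ⟨fun _ _ h => relOn_symm h⟩).symm _ _) h
    -- the target assignment
    set gset : V → Set (Fin n) := fun x => {g | kept g ∧
      ∃ x' y', RTGU x x' ∧ x' ∈ U ∧ y' ∈ Y' ∧ ψ y' = g ∧ G.Adj x' y'} with hgset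
    set pickT : Set (Fin n) → Option (Fin n) :=
      fun S => if h : ∃ g, g ∈ S then some h.choose else none with hpickT
    set Tgt : V → Option (Fin n) := fun x => pickT (gset x) with hTgt
    have hgset_congr : ∀ a b, RTGU a b → gset a = gset b := by
      intro a b hab
      ext g
      simp only [hgset, Set.mem_setOf_eq]
      constructor
      · rintro ⟨hg, x', y', hr, hrest⟩
        exact ⟨hg, x', y', Relation.ReflTransGen.trans (hRTGUsymm a b hab) hr, hrest⟩
      · rintro ⟨hg, x', y', hr, hrest⟩
        exact ⟨hg, x', y', Relation.ReflTransGen.trans hab hr, hrest⟩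
    have hTgt_congr : ∀ a b, RTGU a b → Tgt a = Tgt b := by
      intro a b hab
      simp only [hTgt]
      rw [hgset_congr a b hab]
    have hTgtSome : ∀ x g, Tgt x = some g → g ∈ gset x := by
      intro x g hxg
      simp only [hTgt, hpickT] at hxg
      split at hxg
      · rename_i hex
        rw [Option.some_inj] at hxg
        rw [← hxg]
        exact hex.choose_spec
      · exact absurd hxg (by simp)
    have hTgtNone : ∀ x, Tgt x = none → ∀ g, g ∉ gset x := by
      intro x hx g hg
      simp only [hTgt, hpickT] at hx
      split at hx
      · exact absurd hx (by simp)
      · rename_i hex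
        exact hex ⟨g, hg⟩
    -- L1: every vertex of U reaches, within U, a vertex adjacent to a Y-vertex of its bag
    have L1 : ∀ x ∈ U, ∃ x' y, RTGU x x' ∧ x' ∈ U ∧ y ∈ Y ∧ ψ y = ψ x ∧ G.Adj x' y := by
      rintro x ⟨hxX, hxm⟩
      obtain ⟨r, hrR, hrψ⟩ := hxm
      set W : Set V := {v | ψ v = ψ x} with hWdef
      have hWU : W ∩ X ⊆ U := by
        rintro v ⟨hvW, hvX⟩
        refine ⟨hvX, ?_⟩
        have : ψ v = ψ x := hvW
        rw [this]
        exact ⟨r, hrR, hrψ⟩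
      have hrtg : Relation.ReflTransGen (RelOn G W) x r :=
        (hWconn (ψ x)).2 x rfl r hrψ
      have main : ∀ a, Relation.ReflTransGen (RelOn G W) a r → a ∈ X →
          ∃ x' y, Relation.ReflTransGen (RelOn G (W ∩ X)) a x' ∧ x' ∈ W ∩ X ∧
            y ∈ W ∧ y ∈ Y ∧ G.Adj x' y := by
        intro a h
        induction h using Relation.ReflTransGen.head_induction_on with
        | refl => intro haX; exact (Set.disjoint_left.1 hdisj haX hrR.1).elim
        | @head a' c h' h'' ih =>
            intro haX
            have hcW : c ∈ W := h'.2.2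
            have haW : a' ∈ W := h'.2.1
            rcases (by rw [hunion]; exact Set.mem_univ c : c ∈ X ∪ Y) with hcX | hcY
            · obtain ⟨x', y, hrtg', hx'WX, hyW, hyY, hadjxy⟩ := ih hcX
              exact ⟨x', y, hrtg'.head ⟨h'.1, ⟨haW, haX⟩, ⟨hcW, hcX⟩⟩, hx'WX, hyW, hyY, hadjxy⟩
            · exact ⟨a', c, Relation.ReflTransGen.refl, ⟨haW, haX⟩, hcW, hcY, h'.1⟩
      obtain ⟨x', y, hrtg', hx'WX, hyW, hyY, hadjxy⟩ := main x hrtg hxX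
      exact ⟨x', y, rtg_mono hWU hrtg', hWU hx'WX, hyY, hyW, hadjxy⟩
    -- L2
    have L2 : ∀ x ∈ U, Tgt x = none →
        ∃ x' y', RTGU x x' ∧ x' ∈ U ∧ y' ∈ Y' ∧ (meets (ψ y') ∨ y' = ystar) ∧ G.Adj x' y' := by
      intro x hxU hxnone
      obtain ⟨x', y, hreach, hx'U, hyY, hyψ, hadjxy⟩ := L1 x hxU
      by_cases hyY' : y ∈ Y'
      · refine ⟨x', y, hreach, hx'U, hyY', Or.inl ?_, hadjxy⟩
        rw [hyψ]
        exact hxU.2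
      · have hMres := hM1 {x'} (Set.singleton_subset_iff.2 (hUX hx'U))
          (by rw [Set.ncard_singleton]; exact hd)
          ⟨y, hyY, Set.singleton_subset_iff.2 hadjxy.symm⟩
        obtain ⟨y'', hy''Y', hy''N⟩ := hMres
        have hadj2 : G.Adj x' y'' := (Set.singleton_subset_iff.1 hy''N).symm
        by_cases hm : meets (ψ y'')
        · exact ⟨x', y'', hreach, hx'U, hy''Y', Or.inl hm, hadj2⟩
        · by_cases hh : ψ y'' = hstarIdx
          · exact ⟨x', y'', hreach, hx'U, hy''Y', Or.inr (hstar y'' (hh.trans hhstar)), hadj2⟩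
          · exact absurd (⟨⟨hm, hh⟩, x', y'', hreach, hx'U, hy''Y', rfl, hadj2⟩ :
              ψ y'' ∈ gset x) (hTgtNone x hxnone (ψ y''))
    -- the new parts
    set Core : Set V := {ystar} ∪ {v | v ∈ Y' ∧ meets (ψ v)} ∪ {x | x ∈ U ∧ Tgt x = none}
      with hCoreDef
    set Parts : Option {g : Fin n // kept g} → Set V := fun i =>
      i.elim Core (fun g => {v | ψ v = g.1} ∪ {x | x ∈ U ∧ Tgt x = some g.1}) with hPartsDef
    have hmemCore : ∀ v, v ∈ Core ↔
        (v = ystar ∨ (v ∈ Y' ∧ meets (ψ v)) ∨ (v ∈ U ∧ Tgt v = none)) := by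
      intro v
      simp only [hCoreDef, Set.mem_union, Set.mem_setOf_eq, Set.mem_singleton_iff]
      rw [or_assoc]
    have hmemP : ∀ (g : {g : Fin n // kept g}) (v : V), v ∈ Parts (some g) ↔
        (ψ v = g.1 ∨ (v ∈ U ∧ Tgt v = some g.1)) := by
      intro g v
      simp only [hPartsDef, Option.elim, Set.mem_union, Set.mem_setOf_eq]
    have hystarCore : ystar ∈ Core := (hmemCore ystar).2 (Or.inl rfl)
    have hWsub : ∀ g : Fin n, kept g → {v : V | ψ v = g} ⊆ s := by
      intro g hg v hv
      have hvψ : ψ v = g := hv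
      rcases (by rw [hunion]; exact Set.mem_univ v : v ∈ X ∪ Y) with hX | hY
      · exact Or.inl hX
      · by_cases hY' : v ∈ Y'
        · exact Or.inr hY'
        · exact absurd (⟨v, ⟨hY, hY'⟩, hvψ⟩ : meets g) hg.1
    have hCoresub : Core ⊆ s := by
      intro v hv
      rcases (hmemCore v).1 hv with rfl | ⟨hvY', _⟩ | ⟨hvU, _⟩
      · exact Or.inr hystarY'
      · exact Or.inr hvY'
      · exact Or.inl (hUX hvU)
    have hPne : ∀ i, (Parts i).Nonempty := by
      intro i
      match i with
      | none => exact ⟨ystar, hystarCore⟩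
      | some g =>
        obtain ⟨w, hw⟩ := hsurj g.1
        exact ⟨w, (hmemP g w).2 (Or.inl hw)⟩
    have hPdisj : ∀ i j, i ≠ j → Disjoint (Parts i) (Parts j) := by
      have hCS : ∀ g : {g : Fin n // kept g}, ∀ v, v ∈ Core → v ∈ Parts (some g) → False := by
        intro g v hvC hvP
        rcases (hmemCore v).1 hvC with rfl | ⟨hvY', hvm⟩ | ⟨hvU, hvnone⟩
        · rcases (hmemP g v).1 hvP with hψ | ⟨hvU, _⟩
          · exact g.2.2 ((hhstar.trans hψ).symm ▸ rfl)
          · exact Set.disjoint_left.1 hdisj (hUX hvU) hystarY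
        · rcases (hmemP g v).1 hvP with hψ | ⟨hvU, _⟩
          · exact g.2.1 (by rw [← hψ]; exact hvm)
          · exact Set.disjoint_left.1 hdisj (hUX hvU) (hY'Y hvY')
        · rcases (hmemP g v).1 hvP with hψ | ⟨_, hvsome⟩
          · exact g.2.1 (by rw [← hψ]; exact hvU.2)
          · rw [hvnone] at hvsome
            cases hvsome
      intro i j hij
      rw [Set.disjoint_left]
      intro v hvi hvj
      match i, j with
      | none, none => exact hij rfl
      | none, some g => exact hCS g v hvi hvj
      | some g, none => exact hCS g v hvj hvi
      | some g, some g' =>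
        have hgg' : g.1 ≠ g'.1 := fun h => hij (by rw [Option.some_inj]; exact Subtype.ext h)
        rcases (hmemP g v).1 hvi with hψ | ⟨hvU, hvs⟩ <;>
          rcases (hmemP g' v).1 hvj with hψ' | ⟨hvU', hvs'⟩
        · exact hgg' (hψ.symm.trans hψ')
        · exact g.2.1 (by rw [← hψ]; exact hvU'.2)
        · exact g'.2.1 (by rw [← hψ']; exact hvU.2)
        · rw [hvs] at hvs'
          exact hgg' (Option.some_inj.1 hvs')
    have hPcover : (⋃ i, Parts i) = s := by
      ext v
      simp only [Set.mem_iUnion]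
      constructor
      · rintro ⟨i, hvi⟩
        match i with
        | none => exact hCoresub hvi
        | some g =>
          rcases (hmemP g v).1 hvi with hψ | ⟨hvU, _⟩
          · exact hWsub g.1 g.2 hψ
          · exact Or.inl (hUX hvU)
      · intro hvs
        rcases hvs with hvX | hvY'
        · by_cases hm : meets (ψ v)
          · have hvU : v ∈ U := ⟨hvX, hm⟩
            cases hTv : Tgt v with
            | none => exact ⟨none, (hmemCore v).2 (Or.inr (Or.inr ⟨hvU, hTv⟩))⟩
            | some g =>
                have hg := hTgtSome v g hTv
                exact ⟨some ⟨g, hg.1⟩, (hmemP ⟨g, hg.1⟩ v).2 (Or.inr ⟨hvU, hTv⟩)⟩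
          · have hvne : ψ v ≠ hstarIdx := by
              intro h
              have := hstar v (h.trans hhstar)
              subst this
              exact Set.disjoint_left.1 hdisj hvX (hY'Y hystarY')
            exact ⟨some ⟨ψ v, ⟨hm, hvne⟩⟩, (hmemP _ v).2 (Or.inl rfl)⟩
        · by_cases hm : meets (ψ v)
          · exact ⟨none, (hmemCore v).2 (Or.inr (Or.inl ⟨hvY', hm⟩))⟩
          · by_cases hh : ψ v = hstarIdx
            · exact ⟨none, (hmemCore v).2 (Or.inl (hstar v (hh.trans hhstar)))⟩
            · exact ⟨some ⟨ψ v, ⟨hm, hh⟩⟩, (hmemP _ v).2 (Or.inl rfl)⟩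
    have helperU : ∀ (o : Option (Fin n)) (Pset : Set V),
        (∀ a, a ∈ U → Tgt a = o → a ∈ Pset) →
        ∀ a b, RTGU a b → a ∈ U → Tgt a = o →
          Relation.ReflTransGen (RelOn G Pset) a b := by
      intro o Pset hsub a b hab
      induction hab using Relation.ReflTransGen.head_induction_on with
      | refl => intro _ _; exact .refl
      | @head a' cc h' h'' ih =>
          intro ha'U ha'T
          have hcU : cc ∈ U := h'.2.2
          have hcT : Tgt cc = o := by
            rw [← hTgt_congr a' cc (Relation.ReflTransGen.single h')]
            exact ha'T
          exact (ih hcU hcT).head ⟨h'.1, hsub a' ha'U ha'T, hsub cc hcU hcT⟩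
    have hPconn : ∀ i, ConnOn G (Parts i) := by
      intro i
      match i with
      | none =>
        refine rtg_base ystar hystarCore ?_
        intro v hv
        rcases (hmemCore v).1 hv with rfl | ⟨hvY', hvm⟩ | ⟨hvU, hvnone⟩
        · exact .refl
        · have hvne : v ≠ ystar := by
            rintro rfl
            exact hmstar (by rw [hhstar]; exact hvm)
          exact Relation.ReflTransGen.single
            ⟨hclique v (hY'Y hvY') ystar hystarY hvne, hv, hystarCore⟩
        · obtain ⟨x', y', hreach, hx'U, hy'Y', hy'alt, hadjxy⟩ := L2 v hvU hvnone
          have hstep1 : Relation.ReflTransGen (RelOn G Core) v x' :=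
            helperU none Core
              (fun a haU haT => (hmemCore a).2 (Or.inr (Or.inr ⟨haU, haT⟩)))
              v x' hreach hvU hvnone
          have hx'Core : x' ∈ Core := (hmemCore x').2 (Or.inr (Or.inr ⟨hx'U, by
            rw [← hTgt_congr v x' hreach]; exact hvnone⟩))
          have hy'Core : y' ∈ Core := by
            rcases hy'alt with hm | rfl
            · exact (hmemCore y').2 (Or.inr (Or.inl ⟨hy'Y', hm⟩))
            · exact hystarCore
          have hstep2 : Relation.ReflTransGen (RelOn G Core) x' y' :=
            Relation.ReflTransGen.single ⟨hadjxy, hx'Core, hy'Core⟩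
          have hstep3 : Relation.ReflTransGen (RelOn G Core) y' ystar := by
            by_cases h : y' = ystar
            · rw [h]
            · exact Relation.ReflTransGen.single
                ⟨hclique y' (hY'Y hy'Y') ystar hystarY h, hy'Core, hystarCore⟩
          exact (hstep1.trans hstep2).trans hstep3
      | some g =>
        obtain ⟨w, hw⟩ := hsurj g.1
        have hwP : w ∈ Parts (some g) := (hmemP g w).2 (Or.inl hw)
        have hfibsub : {v : V | ψ v = g.1} ⊆ Parts (some g) :=
          fun v hv => (hmemP g v).2 (Or.inl hv)
        refine rtg_base w hwP ?_
        intro v hv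
        rcases (hmemP g v).1 hv with hψ | ⟨hvU, hvs⟩
        · exact rtg_mono hfibsub ((hWconn g.1).2 v hψ w hw)
        · obtain ⟨hkg, x', y', hreach, hx'U, hy'Y', hy'ψ, hadjxy⟩ := hTgtSome v g.1 hvs
          have hstep1 : Relation.ReflTransGen (RelOn G (Parts (some g))) v x' :=
            helperU (some g.1) (Parts (some g))
              (fun a haU haT => (hmemP g a).2 (Or.inr ⟨haU, haT⟩))
              v x' hreach hvU hvs
          have hx'P : x' ∈ Parts (some g) := (hmemP g x').2 (Or.inr ⟨hx'U, by
            rw [← hTgt_congr v x' hreach]; exact hvs⟩)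
          have hy'P : y' ∈ Parts (some g) := hfibsub hy'ψ
          have hstep2 : Relation.ReflTransGen (RelOn G (Parts (some g))) x' y' :=
            Relation.ReflTransGen.single ⟨hadjxy, hx'P, hy'P⟩
          have hstep3 := rtg_mono hfibsub ((hWconn g.1).2 y' hy'ψ w hw)
          exact (hstep1.trans hstep2).trans hstep3
    have hPadj : ∀ i j, i ≠ j → ∃ u ∈ Parts i, ∃ v ∈ Parts j, G.Adj u v := by
      have hCS : ∀ g : {g : Fin n // kept g}, ∃ u ∈ Core, ∃ v ∈ Parts (some g), G.Adj u v := by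
        intro g
        obtain ⟨u, v, huv, hu, hv⟩ := hadjW hstarIdx g.1 (Ne.symm g.2.2)
        have hue : u = ystar := hstar u (hu.trans hhstar)
        subst hue
        exact ⟨u, hystarCore, v, (hmemP g v).2 (Or.inl hv), huv⟩
      intro i j hij
      match i, j with
      | none, none => exact absurd rfl hij
      | none, some g => exact hCS g
      | some g, none =>
        obtain ⟨u, hu, v, hv, huv⟩ := hCS g
        exact ⟨v, hv, u, hu, huv.symm⟩
      | some g, some g' =>
        have hgg' : g.1 ≠ g'.1 := fun h => hij (by rw [Option.some_inj]; exact Subtype.ext h)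
        obtain ⟨u, v, huv, hu, hv⟩ := hadjW g.1 g'.1 hgg'
        exact ⟨u, (hmemP g u).2 (Or.inl hu), v, (hmemP g' v).2 (Or.inl hv), huv⟩
    obtain ⟨c'', hc'', hcard⟩ := package G s Parts hPdisj hPcover hPne hPconn hPadj
    have hι : Fintype.card (Option {g : Fin n // kept g})
        = Fintype.card {g : Fin n // kept g} + 1 := Fintype.card_option
    set K := Fintype.card {g : Fin n // kept g} with hK
    set m := (Finset.univ.filter (fun h : Fin n => meets h)).card with hmdef
    have hnsplit : n = m + 1 + K := by
      have h1 : (Finset.univ.filter (fun h : Fin n => meets h)).card +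
          (Finset.univ.filter (fun h : Fin n => ¬ meets h)).card = n := by
        rw [Finset.card_filter_add_card_filter_not, Finset.card_univ, Fintype.card_fin]
      have h2 : (Finset.univ.filter (fun h : Fin n => ¬ meets h)).erase hstarIdx
          = Finset.univ.filter (fun h : Fin n => kept h) := by
        ext h
        simp only [Finset.mem_erase, Finset.mem_filter, Finset.mem_univ, true_and]
        constructor
        · rintro ⟨hne2, hnm⟩; exact ⟨hnm, hne2⟩
        · rintro ⟨hnm, hne2⟩; exact ⟨hne2, hnm⟩
      have h3 : hstarIdx ∈ Finset.univ.filter (fun h : Fin n => ¬ meets h) := by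
        simp only [Finset.mem_filter, Finset.mem_univ, true_and]
        exact hmstar
      have h4 := Finset.card_erase_add_one h3
      rw [h2] at h4
      have h5 : K = (Finset.univ.filter (fun h : Fin n => kept h)).card :=
        Fintype.card_subtype _
      omega
    have hmR : m ≤ R.ncard := by
      haveI : Fintype ↥R := Fintype.ofFinite _
      set f : Fin n → V := fun h => if hh : meets h then hh.choose else ystar with hfdef
      have hfspec : ∀ h : Fin n, meets h → f h ∈ R ∧ ψ (f h) = h := by
        intro h hh
        simp only [hfdef, dif_pos hh]
        exact ⟨hh.choose_spec.1, hh.choose_spec.2⟩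
      rw [Set.ncard_eq_toFinset_card', hmdef]
      refine Finset.card_le_card_of_injOn f ?_ ?_
      · intro h hh
        rw [Finset.mem_coe, Finset.mem_filter] at hh
        rw [Finset.mem_coe, Set.mem_toFinset]
        exact (hfspec h hh.2).1
      · intro a ha b hb hab
        rw [Finset.coe_filter, Set.mem_setOf_eq] at ha hb
        rw [← (hfspec a ha.2).2, ← (hfspec b hb.2).2, hab]
    have hsncard : s.ncard + R.ncard = Fintype.card V := by
      rw [← Set.ncard_union_eq hsRdisj (Set.toFinite s) (Set.toFinite R), hsR,
        Set.ncard_univ, Nat.card_eq_fintype_card]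
    rw [hι] at hcard
    exact ⟨c'', by omega, hc''⟩
end
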